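/- Determinant factorization: for natural numbers p, N, a partition λ₁ ≥ … ≥ λ_N ≥ 0 and any function f, det_{1≤I,J≤N} [δ_{p | (λ_I + J − I)} · f((λ_I + J − I)/p)] = δ_p(λ) · ∏_{μ=0}^{p−1} det_{1≤i,j≤n_μ} [f((λ/p^{(μ)})_i + j − i)], where n_μ = ⌊(N−μ−1)/p⌋ + 1, λ/p^{(μ)} are the components of the p-quotient of λ, and δ_p(λ) ∈ {0, ±1} is the p-signature of λ (zero unless λ has trivial remainder data). -/

import Mathlib

open Set

namespace MM

/-- `f : ℕ → ℕ` encodes a partition (0-indexed rows) if it is antitone and eventually zero. -/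
def IsPartition (f : ℕ → ℕ) : Prop :=
  Antitone f ∧ ∃ N, ∀ i, N ≤ i → f i = 0

/-- boxes of the Young diagram (0-indexed) -/
def cells (f : ℕ → ℕ) : Set (ℕ × ℕ) := {c | c.2 < f c.1}

noncomputable def size (f : ℕ → ℕ) : ℕ := (cells f).ncard

noncomputable def transpose (f : ℕ → ℕ) : ℕ → ℕ := fun j => {i | j < f i}.ncard

/-- hook length of a box -/
noncomputable def hook (f : ℕ → ℕ) (c : ℕ × ℕ) : ℤ :=
  (f c.1 : ℤ) + transpose f c.2 - c.1 - c.2 - 1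

/-- content of a box -/
def content (c : ℕ × ℕ) : ℤ := (c.2 : ℤ) - c.1

/-- Maya (beta) set of a partition: beads at positions `f i - i - 1`. -/
def maya (f : ℕ → ℕ) : Set ℤ := {z | ∃ i : ℕ, z = (f i : ℤ) - i - 1}

/-- the `i`-th largest element ("bead" of rank `i`) of a set of integers -/
noncomputable def bead (S : Set ℤ) (i : ℕ) : ℤ :=
  sSup {z | z ∈ S ∧ {w | w ∈ S ∧ z < w}.ncard = i}

/-- the partition encoded by a Maya set: row `i` counts holes below bead `i`. -/
noncomputable def partOf (S : Set ℤ) : ℕ → ℕ :=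
  fun i => {t | t ∉ S ∧ t < bead S i}.ncard

/-- column-`μ` bead set: bead `z` lies in column `(-z-1) mod p`. -/
def col (S : Set ℤ) (p μ : ℕ) : Set ℤ := {k | (p : ℤ) * k - μ - 1 ∈ S}

noncomputable def charge (S : Set ℤ) : ℤ :=
  ({z | z ∈ S ∧ 0 ≤ z}.ncard : ℤ) - ({z | z ∉ S ∧ z < 0}.ncard : ℤ)

/-- the `μ`-th component of the `p`-quotient of the partition `f` -/
noncomputable def pquot (f : ℕ → ℕ) (p μ : ℕ) : ℕ → ℕ :=
  partOf (col (maya f) p μ)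

/-- the Maya set of the `p`-core: slide all beads down in each column. -/
noncomputable def coreMaya (f : ℕ → ℕ) (p : ℕ) : Set ℤ :=
  {z | ∃ μ : ℕ, μ < p ∧ ∃ k : ℤ, k < charge (col (maya f) p μ) ∧ z = (p:ℤ) * k - μ - 1}

/-- the `p`-core of `f` -/
noncomputable def pcore (f : ℕ → ℕ) (p : ℕ) : ℕ → ℕ := partOf (coreMaya f p)

/-- the rearrangement map `σ̂`: overall bead rank ↦ `p * (rank within its column) + column`. -/
noncomputable def sigmaHat (f : ℕ → ℕ) (p : ℕ) : ℕ → ℕ :=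
  fun I =>
    p * ({w | w ∈ maya f ∧ bead (maya f) I < w ∧ (p:ℤ) ∣ (w - bead (maya f) I)}.ncard)
      + ((-(bead (maya f) I) - 1) % (p:ℤ)).toNat

/-- the `p`-signature of `f`: the sign of `σ̂` if finitary, else `0`,
computed as the parity of the (finite) number of inversions. -/
noncomputable def psign (f : ℕ → ℕ) (p : ℕ) : ℤ :=
  letI := Classical.propDecidable
  if {q : ℕ × ℕ | q.1 < q.2 ∧ sigmaHat f p q.2 < sigmaHat f p q.1}.Finite then
    (-1) ^ ({q : ℕ × ℕ | q.1 < q.2 ∧ sigmaHat f p q.2 < sigmaHat f p q.1}.ncard)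
  else 0

end MM

namespace DF
open MM

/-- rank of `z` in `S`: number of elements of `S` above `z`. -/
noncomputable def rnk (S : Set ℤ) (z : ℤ) : ℕ := {w | w ∈ S ∧ z < w}.ncard

lemma ncard_Ioo' (a b : ℤ) : (Set.Ioo a b).ncard = (b - a - 1).toNat := by
  rw [← Finset.coe_Ioo, Set.ncard_coe_finset, Int.card_Ioo]

section general

variable {S : Set ℤ} {a b : ℤ}

lemma fin_above (hhi : ∀ z, b ≤ z → z ∉ S) (z : ℤ) : {w | w ∈ S ∧ z < w}.Finite := by
  apply (Set.finite_Ioo z b).subset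
  rintro w ⟨hw, h⟩
  exact ⟨h, lt_of_not_ge fun hb => hhi w hb hw⟩

lemma fin_holes (hlo : ∀ z ≤ a, z ∈ S) (z : ℤ) : {t | t ∉ S ∧ t < z}.Finite := by
  apply (Set.finite_Ioo a z).subset
  rintro t ⟨ht, h⟩
  exact ⟨lt_of_not_ge fun hb => ht (hlo t hb), h⟩

lemma rnk_lt (hhi : ∀ z, b ≤ z → z ∉ S) {z z' : ℤ} (hz' : z' ∈ S) (h : z < z') :
    rnk S z' < rnk S z := by
  apply Set.ncard_lt_ncard _ (fin_above hhi z)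
  constructor
  · rintro w ⟨hw, hw2⟩; exact ⟨hw, h.trans hw2⟩
  · intro hsub
    exact absurd (hsub ⟨hz', h⟩).2 (lt_irrefl z')

lemma rnk_injOn (hhi : ∀ z, b ≤ z → z ∉ S) {z z' : ℤ} (hz : z ∈ S) (hz' : z' ∈ S)
    (h : rnk S z = rnk S z') : z = z' := by
  rcases lt_trichotomy z z' with hc | hc | hc
  · exact absurd h (ne_of_gt (rnk_lt hhi hz' hc))
  · exact hc
  · exact absurd h (ne_of_lt (rnk_lt hhi hz hc))

lemma exists_rnk (hlo : ∀ z ≤ a, z ∈ S) (hhi : ∀ z, b ≤ z → z ∉ S) (i : ℕ) :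
    ∃ z ∈ S, rnk S z = i := by
  induction i with
  | zero =>
    obtain ⟨z0, hz0, hmax⟩ := Int.exists_greatest_of_bdd
      (⟨b, fun z hz => le_of_lt (lt_of_not_ge fun hb => hhi z hb hz)⟩)
      ⟨a, hlo a le_rfl⟩
    refine ⟨z0, hz0, ?_⟩
    have : {w | w ∈ S ∧ z0 < w} = ∅ := by
      ext w; simp only [Set.mem_setOf_eq, Set.mem_empty_iff_false, iff_false, not_and]
      intro hw; exact not_lt.mpr (hmax w hw)
    rw [rnk, this, Set.ncard_empty]
  | succ i ih =>
    obtain ⟨z, hz, hr⟩ := ih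
    obtain ⟨z', ⟨hz'S, hz'lt⟩, hmax⟩ := Int.exists_greatest_of_bdd
      (P := fun w => w ∈ S ∧ w < z)
      (⟨z - 1, fun w hw => by omega⟩)
      ⟨min (z - 1) a, hlo _ (min_le_right _ _), by
        have := min_le_left (z - 1) a; omega⟩
    refine ⟨z', hz'S, ?_⟩
    have hins : {w | w ∈ S ∧ z' < w} = insert z {w | w ∈ S ∧ z < w} := by
      ext w
      simp only [Set.mem_setOf_eq, Set.mem_insert_iff]
      constructor
      · rintro ⟨hw, hw2⟩
        rcases lt_trichotomy w z with hc | hc | hc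
        · exact absurd (hmax w ⟨hw, hc⟩) (not_le.mpr hw2)
        · exact Or.inl hc
        · exact Or.inr ⟨hw, hc⟩
      · rintro (rfl | ⟨hw, hw2⟩)
        · exact ⟨hz, hz'lt⟩
        · exact ⟨hw, hz'lt.trans hw2⟩
    rw [rnk, hins, Set.ncard_insert_of_notMem (by simp) (fin_above hhi z)]
    exact congrArg (· + 1) hr

lemma bead_spec (hlo : ∀ z ≤ a, z ∈ S) (hhi : ∀ z, b ≤ z → z ∉ S) (i : ℕ) :
    bead S i ∈ S ∧ rnk S (bead S i) = i := by
  obtain ⟨z, hz, hr⟩ := exists_rnk hlo hhi i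
  have hset : {w | w ∈ S ∧ {w' | w' ∈ S ∧ w < w'}.ncard = i} = {z} := by
    ext w
    simp only [Set.mem_setOf_eq, Set.mem_singleton_iff]
    constructor
    · rintro ⟨hw, hw2⟩
      exact rnk_injOn hhi hw hz (by rw [rnk, hw2, hr])
    · rintro rfl; exact ⟨hz, hr⟩
  have : bead S i = z := by rw [bead, hset, csSup_singleton]
  rw [this]; exact ⟨hz, hr⟩

lemma bead_eq (hlo : ∀ z ≤ a, z ∈ S) (hhi : ∀ z, b ≤ z → z ∉ S) {z : ℤ} {i : ℕ}
    (hz : z ∈ S) (hr : rnk S z = i) : bead S i = z := by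
  obtain ⟨h1, h2⟩ := bead_spec hlo hhi i
  exact rnk_injOn hhi h1 hz (by rw [h2, hr])

lemma bead_formula (hlo : ∀ z ≤ a, z ∈ S) (hhi : ∀ z, b ≤ z → z ∉ S) (i : ℕ) :
    (bead S i : ℤ) = partOf S i + charge S - i - 1 := by
  obtain ⟨hzS, hzr⟩ := bead_spec hlo hhi i
  set z := bead S i with hzdef
  set a' := min a (min (z - 1) (-1)) with ha'
  set b' := max b (max (z + 1) 1) with hb'
  have hlo' : ∀ w ≤ a', w ∈ S := fun w hw => hlo w (by omega)
  have hSlt : ∀ w ∈ S, w < b' := fun w hw => by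
    by_contra h
    exact hhi w (by omega) hw
  have hholes : ∀ t, t ∉ S → a' < t := fun t ht => by
    by_contra h
    exact ht (hlo' t (by omega))
  have ha'z : a' < z := by omega
  have ha'0 : a' < 0 := by omega
  have hzb' : z < b' := by omega
  have h0b' : (0:ℤ) < b' := by omega
  -- the six finite sets
  have hfin : ∀ X : Set ℤ, X ⊆ Set.Ioo a' b' → X.Finite :=
    fun X h => (Set.finite_Ioo a' b').subset h
  have fs1 : {w | w ∈ S ∧ a' < w ∧ w < z}.Finite :=
    hfin _ (by rintro w ⟨h1, h2, h3⟩; exact ⟨h2, h3.trans hzb'⟩)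
  have fs2 : {w | w ∈ S ∧ a' < w ∧ w < 0}.Finite :=
    hfin _ (by rintro w ⟨h1, h2, h3⟩; exact ⟨h2, h3.trans h0b'⟩)
  have fsr : {w | w ∈ S ∧ z < w}.Finite := fin_above hhi z
  have fsp : {t | t ∉ S ∧ t < z}.Finite := fin_holes hlo z
  have fsb : {w | w ∈ S ∧ 0 ≤ w}.Finite :=
    hfin _ (by rintro w ⟨h1, h2⟩; exact ⟨by omega, hSlt w h1⟩)
  have fsh : {w | w ∉ S ∧ w < 0}.Finite := hfin _
    (by rintro w ⟨h1, h2⟩; exact ⟨hholes w h1, by omega⟩)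
  -- Eq1 : st = (insert z s1) ∪ sr
  have eq1 : {w | w ∈ S ∧ a' < w ∧ w < b'} =
      (insert z {w | w ∈ S ∧ a' < w ∧ w < z}) ∪ {w | w ∈ S ∧ z < w} := by
    ext w
    simp only [Set.mem_setOf_eq, Set.mem_union, Set.mem_insert_iff]
    constructor
    · rintro ⟨h1, h2, h3⟩
      rcases lt_trichotomy w z with hc | hc | hc
      · exact Or.inl (Or.inr ⟨h1, h2, hc⟩)
      · exact Or.inl (Or.inl hc)
      · exact Or.inr ⟨h1, hc⟩
    · rintro ((rfl | ⟨h1, h2, h3⟩) | ⟨h1, h2⟩)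
      · exact ⟨hzS, ha'z, hzb'⟩
      · exact ⟨h1, h2, h3.trans hzb'⟩
      · exact ⟨h1, ha'z.trans h2, hSlt w h1⟩
  have card1 : {w | w ∈ S ∧ a' < w ∧ w < b'}.ncard =
      ({w | w ∈ S ∧ a' < w ∧ w < z}.ncard + 1) + {w | w ∈ S ∧ z < w}.ncard := by
    rw [eq1, Set.ncard_union_eq ?disj (fs1.insert z) fsr,
      Set.ncard_insert_of_notMem (by simp) fs1]
    case disj =>
      rw [Set.disjoint_left]
      rintro w (rfl | ⟨h1, h2, h3⟩) ⟨h4, h5⟩ <;> omega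
  -- Eq2 : st = s2 ∪ sb
  have eq2 : {w | w ∈ S ∧ a' < w ∧ w < b'} =
      {w | w ∈ S ∧ a' < w ∧ w < 0} ∪ {w | w ∈ S ∧ 0 ≤ w} := by
    ext w
    simp only [Set.mem_setOf_eq, Set.mem_union]
    constructor
    · rintro ⟨h1, h2, h3⟩
      rcases le_or_gt 0 w with hc | hc
      · exact Or.inr ⟨h1, hc⟩
      · exact Or.inl ⟨h1, h2, hc⟩
    · rintro (⟨h1, h2, h3⟩ | ⟨h1, h2⟩)
      · exact ⟨h1, h2, h3.trans h0b'⟩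
      · exact ⟨h1, by omega, hSlt w h1⟩
  have card2 : {w | w ∈ S ∧ a' < w ∧ w < b'}.ncard =
      {w | w ∈ S ∧ a' < w ∧ w < 0}.ncard + {w | w ∈ S ∧ 0 ≤ w}.ncard := by
    rw [eq2, Set.ncard_union_eq ?disj fs2 fsb]
    case disj =>
      rw [Set.disjoint_left]
      rintro w ⟨h1, h2, h3⟩ ⟨h4, h5⟩; omega
  -- Eq3 : Ioo a' z = s1 ∪ sp
  have eq3 : Set.Ioo a' z = {w | w ∈ S ∧ a' < w ∧ w < z} ∪ {t | t ∉ S ∧ t < z} := by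
    ext w
    simp only [Set.mem_Ioo, Set.mem_setOf_eq, Set.mem_union]
    constructor
    · rintro ⟨h1, h2⟩
      by_cases hw : w ∈ S
      · exact Or.inl ⟨hw, h1, h2⟩
      · exact Or.inr ⟨hw, h2⟩
    · rintro (⟨h1, h2, h3⟩ | ⟨h1, h2⟩)
      · exact ⟨h2, h3⟩
      · exact ⟨hholes w h1, h2⟩
  have card3 : (z - a' - 1).toNat =
      {w | w ∈ S ∧ a' < w ∧ w < z}.ncard + {t | t ∉ S ∧ t < z}.ncard := by
    rw [← ncard_Ioo', eq3, Set.ncard_union_eq ?disj fs1 fsp]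
    case disj =>
      rw [Set.disjoint_left]
      rintro w ⟨h1, h2, h3⟩ ⟨h4, h5⟩; exact h4 h1
  -- Eq4 : Ioo a' 0 = s2 ∪ sh
  have eq4 : Set.Ioo a' 0 = {w | w ∈ S ∧ a' < w ∧ w < 0} ∪ {w | w ∉ S ∧ w < 0} := by
    ext w
    simp only [Set.mem_Ioo, Set.mem_setOf_eq, Set.mem_union]
    constructor
    · rintro ⟨h1, h2⟩
      by_cases hw : w ∈ S
      · exact Or.inl ⟨hw, h1, h2⟩
      · exact Or.inr ⟨hw, h2⟩
    · rintro (⟨h1, h2, h3⟩ | ⟨h1, h2⟩)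
      · exact ⟨h2, h3⟩
      · exact ⟨hholes w h1, h2⟩
  have card4 : (0 - a' - 1).toNat =
      {w | w ∈ S ∧ a' < w ∧ w < 0}.ncard + {w | w ∉ S ∧ w < 0}.ncard := by
    rw [← ncard_Ioo', eq4, Set.ncard_union_eq ?disj fs2 fsh]
    case disj =>
      rw [Set.disjoint_left]
      rintro w ⟨h1, h2, h3⟩ ⟨h4, h5⟩; exact h4 h1
  -- assemble
  have hch : charge S = ({w | w ∈ S ∧ 0 ≤ w}.ncard : ℤ) - ({w | w ∉ S ∧ w < 0}.ncard : ℤ) := rfl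
  have hp' : partOf S i = {t | t ∉ S ∧ t < z}.ncard := rfl
  have hr' : {w | w ∈ S ∧ z < w}.ncard = i := hzr
  rw [hch, hp']
  omega

end general

end DF

namespace DF
open MM

section maya
variable {f : ℕ → ℕ} {p N : ℕ}

/-- the bead position of row `i` -/
def bet (f : ℕ → ℕ) (i : ℕ) : ℤ := (f i : ℤ) - i - 1

lemma bet_strictAnti (hf : Antitone f) : StrictAnti (bet f) := by
  intro i j hij
  have := hf hij.le
  unfold bet; omega

lemma maya_lo (hN : ∀ i, N ≤ i → f i = 0) : ∀ z : ℤ, z ≤ -(N:ℤ) - 1 → z ∈ maya f := by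
  intro z hz
  refine ⟨(-z - 1).toNat, ?_⟩
  have h1 : ((-z - 1).toNat : ℤ) = -z - 1 := Int.toNat_of_nonneg (by omega)
  have h2 : N ≤ (-z - 1).toNat := by omega
  rw [hN _ h2]
  omega

lemma maya_hi (hf : Antitone f) : ∀ z : ℤ, (f 0 : ℤ) ≤ z → z ∉ maya f := by
  rintro z hz ⟨i, rfl⟩
  have := hf (Nat.zero_le i)
  omega

lemma bead_maya (hf : Antitone f) (hN : ∀ i, N ≤ i → f i = 0) (I : ℕ) :
    bead (maya f) I = bet f I := by
  apply bead_eq (maya_lo hN) (maya_hi hf) ⟨I, by unfold bet; ring⟩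
  have himg : {w | w ∈ maya f ∧ bet f I < w} = bet f '' (Set.Iio I) := by
    ext w
    simp only [Set.mem_setOf_eq, Set.mem_image, Set.mem_Iio]
    constructor
    · rintro ⟨⟨j, rfl⟩, hlt⟩
      exact ⟨j, (bet_strictAnti hf).lt_iff_gt.mp hlt, rfl⟩
    · rintro ⟨j, hj, rfl⟩
      exact ⟨⟨j, by unfold bet; ring⟩, (bet_strictAnti hf).lt_iff_gt.mpr hj⟩
  rw [rnk, himg, Set.ncard_image_of_injective _ (bet_strictAnti hf).injective]
  rw [← Finset.coe_Iio, Set.ncard_coe_finset, Nat.card_Iio]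

/-- the column of row `I`'s bead -/
noncomputable def mu (f : ℕ → ℕ) (p I : ℕ) : ℕ := ((-(bet f I) - 1) % (p:ℤ)).toNat

/-- the height of row `I`'s bead within its column -/
noncomputable def kk (f : ℕ → ℕ) (p : ℕ) (I : ℕ) : ℤ := -((-(bet f I) - 1) / (p:ℤ))

lemma mu_lt (hp : 0 < p) (I : ℕ) : mu f p I < p := by
  have h1 : (-(bet f I) - 1) % (p:ℤ) < p := Int.emod_lt_of_pos _ (by exact_mod_cast hp)
  have h2 : 0 ≤ (-(bet f I) - 1) % (p:ℤ) := Int.emod_nonneg _ (by exact_mod_cast hp.ne')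
  unfold mu; omega

lemma bet_eq_k (hp : 0 < p) (I : ℕ) : (p:ℤ) * kk f p I - mu f p I - 1 = bet f I := by
  have h2 : 0 ≤ (-(bet f I) - 1) % (p:ℤ) := Int.emod_nonneg _ (by exact_mod_cast hp.ne')
  have hdm := Int.mul_ediv_add_emod (-(bet f I) - 1) (p:ℤ)
  unfold kk mu
  have h3 : (p:ℤ) * -((-(bet f I) - 1) / (p:ℤ)) = -((p:ℤ) * ((-(bet f I) - 1) / (p:ℤ))) := by
    ring
  omega

lemma kk_mem (hp : 0 < p) (I : ℕ) : kk f p I ∈ col (maya f) p (mu f p I) := by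
  show (p:ℤ) * kk f p I - mu f p I - 1 ∈ maya f
  rw [bet_eq_k hp]
  exact ⟨I, by unfold bet; ring⟩

lemma col_lo (hp : 0 < p) (hN : ∀ i, N ≤ i → f i = 0) (μ : ℕ) : ∀ k : ℤ, k ≤ -((N:ℤ) + p) → k ∈ col (maya f) p μ := by
  intro k hk
  apply maya_lo hN
  have hpz : (1:ℤ) ≤ p := by exact_mod_cast hp
  nlinarith [mul_le_mul_of_nonneg_left hk (by positivity : (0:ℤ) ≤ p)]

lemma col_hi (hf : Antitone f) (hp : 0 < p) (μ : ℕ) (hμp : μ < p) :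
    ∀ k : ℤ, ((f 0 : ℤ) + 1) ≤ k → k ∉ col (maya f) p μ := by
  intro k hk hmem
  apply maya_hi hf _ _ hmem
  have hpz : (1:ℤ) ≤ p := by exact_mod_cast hp
  have hμz : (μ:ℤ) < (p:ℤ) := by exact_mod_cast hμp
  nlinarith [mul_le_mul_of_nonneg_left hk (by positivity : (0:ℤ) ≤ p)]

lemma sigmaHat_eq (hf : Antitone f) (hp : 0 < p) (hN : ∀ i, N ≤ i → f i = 0) (I : ℕ) :
    sigmaHat f p I = p * rnk (col (maya f) p (mu f p I)) (kk f p I) + mu f p I := by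
  have hpz : (p:ℤ) ≠ 0 := by exact_mod_cast hp.ne'
  unfold sigmaHat
  rw [bead_maya hf hN]
  congr 1
  · congr 1
    have himg : {w | w ∈ maya f ∧ bet f I < w ∧ (p:ℤ) ∣ (w - bet f I)} =
        (fun k : ℤ => (p:ℤ) * k - mu f p I - 1) ''
          {k' | k' ∈ col (maya f) p (mu f p I) ∧ kk f p I < k'} := by
      ext w
      simp only [Set.mem_setOf_eq, Set.mem_image]
      constructor
      · rintro ⟨hw, hlt, t, ht⟩
        refine ⟨kk f p I + t, ⟨?_, ?_⟩, ?_⟩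
        · show (p:ℤ) * (kk f p I + t) - mu f p I - 1 ∈ maya f
          have : (p:ℤ) * (kk f p I + t) - mu f p I - 1 = w := by
            rw [mul_add]
            have := bet_eq_k (f := f) hp I
            omega
          rwa [this]
        · nlinarith [bet_eq_k (f := f) hp I]
        · have := bet_eq_k (f := f) hp I
          rw [mul_add]; omega
      · rintro ⟨k', ⟨hk'c, hk'lt⟩, rfl⟩
        have hb := bet_eq_k (f := f) hp I
        refine ⟨hk'c, ?_, ⟨k' - kk f p I, by ring_nf; omega⟩⟩
        nlinarith
    rw [himg, Set.ncard_image_of_injective]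
    · rfl
    · intro x y hxy
      simp only at hxy
      have : (p:ℤ) * x = (p:ℤ) * y := by omega
      exact mul_left_cancel₀ hpz this

end maya

end DF

namespace DF
open MM

section counting
variable {f : ℕ → ℕ} {p N : ℕ}

/-- block sizes -/
def nn (p N μ : ℕ) : ℕ := (((N:ℤ) - (μ:ℤ) - 1).fdiv p + 1).toNat

/-- row class sizes -/
noncomputable def rF (f : ℕ → ℕ) (p N μ : ℕ) : ℕ :=
  ((Finset.range N).filter (fun I => mu f p I = μ)).card

lemma mu_of_bet (hp : 0 < p) {μ : ℕ} (hμp : μ < p) {I : ℕ} {k : ℤ}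
    (h : bet f I = (p:ℤ) * k - μ - 1) : mu f p I = μ := by
  unfold mu
  rw [h]
  have h5 : -((p:ℤ) * k - μ - 1) - 1 = (μ:ℤ) + (p:ℤ) * (-k) := by ring
  rw [h5, Int.add_mul_emod_self_left,
    Int.emod_eq_of_lt (by positivity) (by exact_mod_cast hμp)]
  simp

lemma kk_of_bet (hp : 0 < p) {μ : ℕ} (hμp : μ < p) {I : ℕ} {k : ℤ}
    (h : bet f I = (p:ℤ) * k - μ - 1) : kk f p I = k := by
  have hmu : mu f p I = μ := mu_of_bet hp hμp h
  have hb := bet_eq_k (f := f) hp I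
  rw [hmu, h] at hb
  have hpz : (p:ℤ) ≠ 0 := by exact_mod_cast hp.ne'
  have h6 : (p:ℤ) * kk f p I = (p:ℤ) * k := by omega
  exact mul_left_cancel₀ hpz h6

lemma nn_iff (hp : 0 < p) {μ : ℕ} (hμ : μ < p) (j : ℕ) :
    j < nn p N μ ↔ p * j + μ < N := by
  have hpz : (0:ℤ) < p := by exact_mod_cast hp
  unfold nn
  rw [Int.fdiv_eq_ediv_of_nonneg _ (by positivity)]
  have key : (j:ℤ) ≤ ((N:ℤ) - μ - 1) / p ↔ (j:ℤ) * p ≤ (N:ℤ) - μ - 1 :=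
    Int.le_ediv_iff_mul_le hpz
  have h3 : (j:ℤ) * p = (p:ℤ) * j := by ring
  have hc : ((p * j + μ : ℕ) : ℤ) = (p:ℤ) * (j:ℤ) + (μ:ℤ) := by push_cast; ring
  constructor
  · intro h
    have h1 : (j:ℤ) ≤ ((N:ℤ) - μ - 1) / p := by omega
    have h2 := key.mp h1
    have h4 : ((p * j + μ : ℕ) : ℤ) < (N:ℤ) := by omega
    exact_mod_cast h4
  · intro h
    have h4 : ((p * j + μ : ℕ) : ℤ) < (N:ℤ) := by exact_mod_cast h
    have h2 : (j:ℤ) * p ≤ (N:ℤ) - μ - 1 := by omega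
    have h1 := key.mpr h2
    omega

lemma count_mod (hp : 0 < p) {μ M K : ℕ} (hμ : μ < p)
    (h : ∀ j : ℕ, j < K ↔ p * j + μ < M) :
    ((Finset.range M).filter (fun x => x % p = μ)).card = K := by
  rw [← Finset.card_range K]
  apply Finset.card_bij' (i := fun x _ => x / p) (j := fun j _ => p * j + μ)
  · intro x hx
    simp only [Finset.mem_filter, Finset.mem_range] at hx
    obtain ⟨hxM, hxμ⟩ := hx
    have hdm : p * (x / p) + μ = x := by
      have := Nat.div_add_mod x p
      omega
    simp only [Finset.mem_range]
    rw [h]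
    omega
  · intro j hj
    simp only [Finset.mem_range] at hj
    simp only [Finset.mem_filter, Finset.mem_range]
    exact ⟨(h j).mp hj, by simp [Nat.mul_add_mod, Nat.mod_eq_of_lt hμ]⟩
  · intro x hx
    simp only [Finset.mem_filter, Finset.mem_range] at hx
    have := Nat.div_add_mod x p
    omega
  · intro j hj
    rw [Nat.mul_add_div hp, Nat.div_eq_of_lt hμ, Nat.add_zero]

lemma mu_tail (hp : 0 < p) (hN : ∀ i, N ≤ i → f i = 0) {I : ℕ} (hI : N ≤ I) :
    mu f p I = I % p := by
  have hfI : f I = 0 := hN I hI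
  have hbet : bet f I = -(I:ℤ) - 1 := by unfold bet; rw [hfI]; push_cast; ring
  unfold mu
  rw [hbet]
  have : -(-(I:ℤ) - 1) - 1 = (I:ℤ) := by ring
  rw [this]
  have : (I:ℤ) % (p:ℤ) = ((I % p : ℕ) : ℤ) := by push_cast; ring
  rw [this, Int.toNat_natCast]

lemma kk_tail (hp : 0 < p) (hN : ∀ i, N ≤ i → f i = 0) {I : ℕ} (hI : N ≤ I) :
    kk f p I = -((I / p : ℕ) : ℤ) := by
  have h1 := bet_eq_k (f := f) hp I
  have hfI : f I = 0 := hN I hI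
  have hbet : bet f I = -(I:ℤ) - 1 := by unfold bet; rw [hfI]; push_cast; ring
  have h2 : mu f p I = I % p := mu_tail hp hN hI
  rw [h2, hbet] at h1
  have h3 : (p:ℤ) * kk f p I = (I % p : ℕ) - I := by omega
  have h4 : (p:ℤ) * -((I / p : ℕ) : ℤ) = (I % p : ℕ) - I := by
    have hdm := Nat.div_add_mod I p
    have hc : ((p * (I / p) : ℕ) : ℤ) + ((I % p : ℕ) : ℤ) = (I:ℤ) := by exact_mod_cast hdm
    have hc2 : ((p * (I / p) : ℕ) : ℤ) = (p:ℤ) * ((I / p : ℕ) : ℤ) := Nat.cast_mul p (I / p)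
    have hr : (p:ℤ) * -((I / p : ℕ) : ℤ) = -((p:ℤ) * ((I / p : ℕ) : ℤ)) := by ring
    omega
  have hpz : (p:ℤ) ≠ 0 := by exact_mod_cast hp.ne'
  apply mul_left_cancel₀ hpz
  omega

lemma rnk_col_tail (hf : Antitone f) (hp : 0 < p) (hN : ∀ i, N ≤ i → f i = 0)
    {I : ℕ} (hI : N ≤ I) :
    nn p N (I % p) ≤ I / p ∧
      rnk (col (maya f) p (I % p)) (-((I / p : ℕ) : ℤ)) =
        rF f p N (I % p) + (I / p - nn p N (I % p)) := by
  set μ := I % p with hμdef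
  set q := I / p with hqdef
  have hμp : μ < p := Nat.mod_lt _ hp
  have hqI : p * q + μ = I := by rw [hμdef, hqdef]; exact Nat.div_add_mod I p
  have hpz : (p:ℤ) ≠ 0 := by exact_mod_cast hp.ne'
  have hbetI : bet f I = (p:ℤ) * (-(q:ℤ)) - μ - 1 := by
    unfold bet; rw [hN I hI]
    have hc : ((p * q : ℕ) : ℤ) + ((μ:ℕ) : ℤ) = (I:ℤ) := by exact_mod_cast hqI
    have hc2 : ((p * q : ℕ) : ℤ) = (p:ℤ) * ((q:ℕ) : ℤ) := Nat.cast_mul p q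
    have hr : (p:ℤ) * (-(q:ℤ)) = -((p:ℤ) * ((q:ℕ) : ℤ)) := by ring
    omega
  -- the set of beads of the column above -q is the image of the row class
  have himg : {k' | k' ∈ col (maya f) p μ ∧ -(q:ℤ) < k'} =
      kk f p '' {I' | I' < I ∧ mu f p I' = μ} := by
    ext k'
    simp only [Set.mem_setOf_eq, Set.mem_image]
    constructor
    · rintro ⟨hk'c, hk'lt⟩
      obtain ⟨I', hI'⟩ := hk'c
      have hb' : bet f I' = (p:ℤ) * k' - μ - 1 := by unfold bet; omega
      refine ⟨I', ⟨?_, mu_of_bet hp hμp hb'⟩, kk_of_bet hp hμp hb'⟩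
      apply (bet_strictAnti hf).lt_iff_gt.mp
      rw [hbetI, hb']
      have hmul : (p:ℤ) * (-(q:ℤ)) < (p:ℤ) * k' :=
        mul_lt_mul_of_pos_left hk'lt (by exact_mod_cast hp)
      linarith
    · rintro ⟨I', ⟨hI'lt, hI'mu⟩, rfl⟩
      have hb := bet_eq_k (f := f) hp I'
      rw [hI'mu] at hb
      constructor
      · show (p:ℤ) * kk f p I' - (μ:ℤ) - 1 ∈ maya f
        rw [hb]
        exact ⟨I', rfl⟩
      · have hblt : bet f I < bet f I' := (bet_strictAnti hf).lt_iff_gt.mpr hI'lt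
        rw [hbetI, ← hb] at hblt
        have : (p:ℤ) * (-(q:ℤ)) < (p:ℤ) * kk f p I' := by omega
        have hppos : (0:ℤ) < p := by exact_mod_cast hp
        exact lt_of_mul_lt_mul_left this (le_of_lt hppos)
  have hinj : Set.InjOn (kk f p) {I' | I' < I ∧ mu f p I' = μ} := by
    rintro x ⟨hx1, hx2⟩ y ⟨hy1, hy2⟩ hxy
    have h1 := bet_eq_k (f := f) hp x
    have h2 := bet_eq_k (f := f) hp y
    rw [hx2] at h1; rw [hy2] at h2
    have : bet f x = bet f y := by rw [← h1, ← h2, hxy]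
    exact (bet_strictAnti hf).injective this
  have hD : {I' | I' < I ∧ mu f p I' = μ} =
      ↑((Finset.range I).filter (fun I' => mu f p I' = μ)) := by
    ext x; simp [Finset.mem_filter, Finset.mem_range]
  -- count the finset
  have hsplit : (Finset.range I).filter (fun I' => mu f p I' = μ) =
      ((Finset.range N).filter (fun I' => mu f p I' = μ)) ∪
        ((Finset.Ico N I).filter (fun I' => mu f p I' = μ)) := by
    rw [← Finset.filter_union]
    congr 1
    rw [Finset.range_eq_Ico, Finset.range_eq_Ico]
    exact (Finset.Ico_union_Ico_eq_Ico (Nat.zero_le N) hI).symm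
  have hdisj : Disjoint ((Finset.range N).filter (fun I' => mu f p I' = μ))
      ((Finset.Ico N I).filter (fun I' => mu f p I' = μ)) := by
    apply Finset.disjoint_filter_filter
    rw [Finset.range_eq_Ico]
    apply Finset.Ico_disjoint_Ico_consecutive
  have hcongr : (Finset.Ico N I).filter (fun I' => mu f p I' = μ) =
      (Finset.Ico N I).filter (fun I' => I' % p = μ) := by
    apply Finset.filter_congr
    intro x hx
    simp only [Finset.mem_Ico] at hx
    rw [mu_tail hp hN hx.1]
  have hIcoCard : ∀ L : ℕ, N ≤ L → ((Finset.Ico N L).filter (fun I' => I' % p = μ)).card +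
      ((Finset.range N).filter (fun I' => I' % p = μ)).card =
      ((Finset.range L).filter (fun I' => I' % p = μ)).card := by
    intro L hL
    have hu : Finset.range L = Finset.range N ∪ Finset.Ico N L := by
      rw [Finset.range_eq_Ico, Finset.range_eq_Ico]
      exact (Finset.Ico_union_Ico_eq_Ico (Nat.zero_le N) hL).symm
    have hd : Disjoint ((Finset.range N).filter (fun I' => I' % p = μ))
        ((Finset.Ico N L).filter (fun I' => I' % p = μ)) := by
      apply Finset.disjoint_filter_filter
      rw [Finset.range_eq_Ico]
      exact Finset.Ico_disjoint_Ico_consecutive 0 N L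
    rw [hu, Finset.filter_union, Finset.card_union_of_disjoint hd]
    omega
  have hcntN : ((Finset.range N).filter (fun x => x % p = μ)).card = nn p N μ :=
    count_mod hp hμp (fun j => nn_iff hp hμp j)
  have hcntI : ((Finset.range I).filter (fun x => x % p = μ)).card = q := by
    apply count_mod hp hμp
    intro j
    constructor
    · intro hj
      have : p * j < p * q := (Nat.mul_lt_mul_left hp).mpr hj
      omega
    · intro hj
      by_contra h
      have : p * q ≤ p * j := Nat.mul_le_mul_left p (by omega)
      omega
  have hIco := hIcoCard I hI
  rw [hcntN, hcntI] at hIco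
  have hnnq : nn p N μ ≤ q := by omega
  refine ⟨hnnq, ?_⟩
  rw [rnk, himg, Set.ncard_image_of_injOn hinj, hD, Set.ncard_coe_finset, hsplit,
    Finset.card_union_of_disjoint hdisj, hcongr]
  rw [rF]
  omega

lemma sigmaHat_tail (hf : Antitone f) (hp : 0 < p) (hN : ∀ i, N ≤ i → f i = 0)
    {I : ℕ} (hI : N ≤ I) :
    sigmaHat f p I =
      p * (rF f p N (I % p) + (I / p - nn p N (I % p))) + I % p := by
  rw [sigmaHat_eq hf hp hN, mu_tail hp hN hI, kk_tail hp hN hI,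
    (rnk_col_tail hf hp hN hI).2]

lemma charge_col (hf : Antitone f) (hp : 0 < p) (hN : ∀ i, N ≤ i → f i = 0)
    {μ : ℕ} (hμp : μ < p) :
    charge (col (maya f) p μ) = 1 + (rF f p N μ : ℤ) - (nn p N μ : ℤ) := by
  set q0 := N + p + nn p N μ with hq0
  set I := p * q0 + μ with hIdef
  have hIN : N ≤ I := by
    have : q0 ≤ p * q0 := Nat.le_mul_of_pos_left _ hp
    omega
  have hImod : I % p = μ := by rw [hIdef, Nat.mul_add_mod, Nat.mod_eq_of_lt hμp]
  have hIdiv : I / p = q0 := by rw [hIdef, Nat.mul_add_div hp, Nat.div_eq_of_lt hμp, Nat.add_zero]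
  have htail := rnk_col_tail hf hp hN hIN
  rw [hImod, hIdiv] at htail
  obtain ⟨hnnq, hrnk⟩ := htail
  have hmem : -(q0:ℤ) ∈ col (maya f) p μ := by
    apply col_lo hp hN μ
    have hc : ((N + p : ℕ) : ℤ) ≤ (q0:ℤ) := by exact_mod_cast (by omega : N + p ≤ q0)
    push_cast at hc
    omega
  set i := rF f p N μ + (q0 - nn p N μ) with hi
  have hbead : bead (col (maya f) p μ) i = -(q0:ℤ) :=
    bead_eq (col_lo hp hN μ) (col_hi hf hp μ hμp) hmem hrnk
  have hpart : partOf (col (maya f) p μ) i = 0 := by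
    unfold partOf
    rw [hbead]
    have : {t | t ∉ col (maya f) p μ ∧ t < -(q0:ℤ)} = ∅ := by
      ext t
      simp only [Set.mem_setOf_eq, Set.mem_empty_iff_false, iff_false, not_and]
      intro ht hlt
      apply ht
      apply col_lo hp hN μ t
      have hc : ((N + p : ℕ) : ℤ) ≤ (q0:ℤ) := by exact_mod_cast (by omega : N + p ≤ q0)
      push_cast at hc
      omega
    rw [this, Set.ncard_empty]
  have hform := bead_formula (col_lo hp hN μ) (col_hi hf hp μ hμp) i
  rw [hbead, hpart] at hform
  have hicast : (i:ℤ) = (rF f p N μ : ℤ) + (q0:ℤ) - (nn p N μ : ℤ) := by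
    rw [hi]
    have : ((rF f p N μ + (q0 - nn p N μ) : ℕ) : ℤ)
        = (rF f p N μ : ℤ) + ((q0:ℤ) - (nn p N μ : ℤ)) := by
      push_cast [Nat.cast_sub hnnq]
      ring
    rw [this]; ring
  rw [hicast] at hform
  omega

lemma sigmaHat_inj (hf : Antitone f) (hp : 0 < p) (hN : ∀ i, N ≤ i → f i = 0) :
    Function.Injective (sigmaHat f p) := by
  intro I J h
  rw [sigmaHat_eq hf hp hN I, sigmaHat_eq hf hp hN J] at h
  have hμI := mu_lt (f := f) hp I
  have hμJ := mu_lt (f := f) hp J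
  have hmu : mu f p I = mu f p J := by
    have h1 : (p * rnk (col (maya f) p (mu f p I)) (kk f p I) + mu f p I) % p = mu f p I := by
      rw [Nat.mul_add_mod, Nat.mod_eq_of_lt hμI]
    have h2 : (p * rnk (col (maya f) p (mu f p J)) (kk f p J) + mu f p J) % p = mu f p J := by
      rw [Nat.mul_add_mod, Nat.mod_eq_of_lt hμJ]
    rw [← h1, ← h2, h]
  rw [hmu] at h
  have hrnk : rnk (col (maya f) p (mu f p J)) (kk f p I)
      = rnk (col (maya f) p (mu f p J)) (kk f p J) := by
    exact Nat.eq_of_mul_eq_mul_left hp (by omega)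
  have hkk : kk f p I = kk f p J := by
    apply rnk_injOn (col_hi hf hp (mu f p J) (mu_lt hp J)) _ _ hrnk
    · rw [← hmu]; exact kk_mem hp I
    · exact kk_mem hp J
  have hbet : bet f I = bet f J := by
    rw [← bet_eq_k (f := f) hp I, ← bet_eq_k (f := f) hp J, hmu, hkk]
  exact (bet_strictAnti hf).injective hbet

lemma div_iff (hp : 0 < p) (I J : ℕ) :
    ((p:ℤ) ∣ ((f I : ℤ) + (J:ℤ) - (I:ℤ))) ↔ J % p = mu f p I := by
  have hb := bet_eq_k (f := f) hp I
  have hkey : (f I : ℤ) + (J:ℤ) - (I:ℤ) = (p:ℤ) * kk f p I + ((J:ℤ) - (mu f p I : ℤ)) := by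
    unfold bet at hb
    omega
  rw [hkey]
  have hμ := mu_lt (f := f) hp I
  constructor
  · rintro ⟨t, ht⟩
    have h1 : (J:ℤ) - (mu f p I : ℤ) = (p:ℤ) * (t - kk f p I) := by rw [mul_sub]; omega
    have h2 : (J:ℤ) % (p:ℤ) = ((mu f p I : ℤ)) % (p:ℤ) := by
      conv_lhs => rw [show (J:ℤ) = (mu f p I : ℤ) + (p:ℤ) * (t - kk f p I) by omega]
      rw [Int.add_mul_emod_self_left]
    have h3 : (mu f p I : ℤ) % (p:ℤ) = (mu f p I : ℤ) :=
      Int.emod_eq_of_lt (by positivity) (by exact_mod_cast hμ)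
    have h4 : (J:ℤ) % (p:ℤ) = ((J % p : ℕ) : ℤ) := by push_cast; ring
    have h5 : ((J % p : ℕ) : ℤ) = ((mu f p I : ℕ) : ℤ) := by rw [← h4, h2, h3]
    exact_mod_cast h5
  · intro hJμ
    have hJm : ((J % p : ℕ) : ℤ) = (J:ℤ) % (p:ℤ) := by push_cast; ring
    have : (J:ℤ) % p = (mu f p I : ℤ) := by rw [← hJm, hJμ]
    obtain ⟨s, hs⟩ : (p:ℤ) ∣ ((J:ℤ) - (mu f p I : ℤ)) := by
      have hd := Int.mul_ediv_add_emod (J:ℤ) (p:ℤ)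
      exact ⟨(J:ℤ) / p, by omega⟩
    exact ⟨kk f p I + s, by rw [mul_add]; omega⟩

end counting

end DF

namespace DF
open MM

section equivs
variable {f : ℕ → ℕ} {p N : ℕ}

/-- reindexing of columns by (residue, quotient) -/
noncomputable def colEquiv (p N : ℕ) (hp : 0 < p) :
    (Σ μ : Fin p, Fin (nn p N μ.val)) ≃ Fin N := by
  apply Equiv.ofBijective (fun x => (⟨p * x.2.val + x.1.val,
    (nn_iff hp x.1.isLt x.2.val).mp x.2.isLt⟩ : Fin N))
  constructor
  · rintro ⟨μ1, j1⟩ ⟨μ2, j2⟩ h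
    simp only [Fin.mk.injEq] at h
    have hμ : μ1.val = μ2.val := by
      have h1 : (p * j1.val + μ1.val) % p = μ1.val := by
        rw [Nat.mul_add_mod, Nat.mod_eq_of_lt μ1.isLt]
      have h2 : (p * j2.val + μ2.val) % p = μ2.val := by
        rw [Nat.mul_add_mod, Nat.mod_eq_of_lt μ2.isLt]
      rw [← h1, ← h2, h]
    obtain rfl : μ1 = μ2 := Fin.ext hμ
    have hj : j1.val = j2.val := Nat.eq_of_mul_eq_mul_left hp (by omega)
    obtain rfl : j1 = j2 := Fin.ext hj
    rfl
  · intro J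
    have hμ : J.val % p < p := Nat.mod_lt _ hp
    have hdm : p * (J.val / p) + J.val % p = J.val := Nat.div_add_mod _ _
    have hj : J.val / p < nn p N (J.val % p) := by
      rw [nn_iff hp hμ]
      rw [hdm]
      exact J.isLt
    exact ⟨⟨⟨J.val % p, hμ⟩, ⟨J.val / p, hj⟩⟩, by simp [Fin.ext_iff, hdm]⟩

lemma sum_nn (hp : 0 < p) : ∑ μ ∈ Finset.range p, nn p N μ = N := by
  have h1 : Fintype.card (Σ μ : Fin p, Fin (nn p N μ.val)) = Fintype.card (Fin N) :=
    Fintype.card_congr (colEquiv p N hp)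
  rw [Fintype.card_sigma, Fintype.card_fin] at h1
  simp only [Fintype.card_fin] at h1
  rw [← Fin.sum_univ_eq_sum_range]
  exact h1

lemma sum_rF (hp : 0 < p) : ∑ μ ∈ Finset.range p, rF f p N μ = N := by
  classical
  have key := Finset.card_eq_sum_card_fiberwise
    (f := fun I => mu f p I) (s := Finset.range N) (t := Finset.range p)
    (fun x _ => Finset.mem_range.mpr (mu_lt hp x))
  rw [Finset.card_range] at key
  conv_rhs => rw [key]
  exact Finset.sum_congr rfl (fun μ _ => rfl)

end equivs

section signstuff

lemma sign_eq_signAux {n : ℕ} (σ : Equiv.Perm (Fin n)) :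
    Equiv.Perm.sign σ = Equiv.Perm.signAux σ := by
  have key : ∀ (s : Multiset (Fin n)) (hs : ∀ x, x ∈ s),
      Equiv.Perm.signAux3 σ hs = Equiv.Perm.signAux σ := by
    intro s
    induction s using Quotient.inductionOn with
    | h l =>
      intro hs
      show Equiv.Perm.signAux2 l σ = _
      rw [← Equiv.Perm.signAux_eq_signAux2 l σ (Equiv.refl _) (fun x _ => hs x)]
      have h9 : ((Equiv.refl (Fin n)).symm.trans σ).trans (Equiv.refl (Fin n)) = σ := by
        ext x; simp
      rw [h9]
  exact key Finset.univ.val Finset.mem_univ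

lemma signAux_eq_pow {n : ℕ} (σ : Equiv.Perm (Fin n)) :
    ((Equiv.Perm.sign σ : ℤˣ) : ℤ) =
      (-1) ^ (((Equiv.Perm.finPairsLT n).filter
        (fun x => σ x.1 ≤ σ x.2)).card) := by
  rw [sign_eq_signAux]
  rw [Equiv.Perm.signAux]
  rw [Finset.prod_ite (fun _ => (-1 : ℤˣ)) (fun _ => (1 : ℤˣ))]
  rw [Finset.prod_const, Finset.prod_const, one_pow, mul_one]
  push_cast
  rfl

/-- determinant of a block-diagonal matrix with variable block sizes -/
lemma det_blockDiagonal'' {p : ℕ} (m' : Fin p → ℕ)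
    (d : ∀ i : Fin p, Matrix (Fin (m' i)) (Fin (m' i)) ℂ) :
    (Matrix.blockDiagonal' d).det = ∏ μ : Fin p, (d μ).det := by
  classical
  rw [(Matrix.blockTriangular_blockDiagonal' d).det]
  have hsub : ∏ a ∈ (Finset.univ : Finset (Σ i : Fin p, Fin (m' i))).image Sigma.fst,
      ((Matrix.blockDiagonal' d).toSquareBlock Sigma.fst a).det
      = ∏ a ∈ (Finset.univ : Finset (Fin p)),
        ((Matrix.blockDiagonal' d).toSquareBlock Sigma.fst a).det := by
    apply Finset.prod_subset (Finset.subset_univ _)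
    intro μ _ hμ
    have : IsEmpty {a : Σ i : Fin p, Fin (m' i) // a.fst = μ} := by
      constructor
      rintro ⟨⟨μ', x⟩, h⟩
      subst h
      exact hμ (Finset.mem_image_of_mem _ (Finset.mem_univ _))
    exact Matrix.det_isEmpty
  rw [hsub]
  apply Finset.prod_congr rfl
  intro μ _
  let e : Fin (m' μ) ≃ {a : Σ i : Fin p, Fin (m' i) // a.fst = μ} :=
    { toFun := fun x => ⟨⟨μ, x⟩, rfl⟩
      invFun := fun a => (congrArg (fun i => Fin (m' i)) a.2).mp a.1.2
      left_inv := fun x => rfl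
      right_inv := by
        rintro ⟨⟨μ', x⟩, h⟩
        subst h
        rfl }
  rw [← Matrix.det_submatrix_equiv_self e]
  congr 1
  funext i j
  show Matrix.blockDiagonal' d ⟨μ, i⟩ ⟨μ, j⟩ = d μ i j
  rw [Matrix.blockDiagonal'_apply_eq]

end signstuff

end DF

namespace DF
open MM

section main
variable {f : ℕ → ℕ} {p N : ℕ}

lemma unbalanced_psign (hf : Antitone f) (hp : 0 < p) (hN : ∀ i, N ≤ i → f i = 0)
    {μp μm : ℕ} (hμpp : μp < p) (hμmp : μm < p)
    (hplus : nn p N μp < rF f p N μp) (hminus : rF f p N μm < nn p N μm) :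
    psign f p = 0 := by
  set K := N + p + nn p N μp + nn p N μm with hK
  have hgen : ∀ n : ℕ,
      (p * (K + n) + μp, p * (K + n + 1) + μm) ∈
        {q : ℕ × ℕ | q.1 < q.2 ∧ sigmaHat f p q.2 < sigmaHat f p q.1} := by
    intro n
    set a := p * (K + n) + μp with ha
    set b := p * (K + n + 1) + μm with hb
    have hKn : K + n ≤ p * (K + n) := Nat.le_mul_of_pos_left _ hp
    have hKn1 : K + n + 1 ≤ p * (K + n + 1) := Nat.le_mul_of_pos_left _ hp
    have haN : N ≤ a := by omega
    have hbN : N ≤ b := by omega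
    have hamod : a % p = μp := by rw [ha, Nat.mul_add_mod, Nat.mod_eq_of_lt hμpp]
    have hadiv : a / p = K + n := by
      rw [ha, Nat.mul_add_div hp, Nat.div_eq_of_lt hμpp, Nat.add_zero]
    have hbmod : b % p = μm := by rw [hb, Nat.mul_add_mod, Nat.mod_eq_of_lt hμmp]
    have hbdiv : b / p = K + n + 1 := by
      rw [hb, Nat.mul_add_div hp, Nat.div_eq_of_lt hμmp, Nat.add_zero]
    have hsa := sigmaHat_tail hf hp hN haN
    have hsb := sigmaHat_tail hf hp hN hbN
    rw [hamod, hadiv] at hsa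
    rw [hbmod, hbdiv] at hsb
    set X := rF f p N μm + (K + n + 1 - nn p N μm) with hX
    set Y := rF f p N μp + (K + n - nn p N μp) with hY
    have hXle : X ≤ K + n := by omega
    have hYge : K + n + 1 ≤ Y := by omega
    have hm1 : p * X ≤ p * (K + n) := Nat.mul_le_mul_left p hXle
    have hm2 : p * (K + n + 1) ≤ p * Y := Nat.mul_le_mul_left p hYge
    have hm3 : p * (K + n) + p = p * (K + n + 1) := by ring
    constructor
    · omega
    · rw [hsa, hsb]
      omega
  have hinj2 : Function.Injective
      (fun n : ℕ => (p * (K + n) + μp, p * (K + n + 1) + μm)) := by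
    intro n m h
    simp only [Prod.mk.injEq] at h
    have h2 := h.2
    have h3 : p * (K + n + 1) = p * (K + m + 1) := by omega
    have h4 := Nat.eq_of_mul_eq_mul_left hp h3
    omega
  have hinf : {q : ℕ × ℕ | q.1 < q.2 ∧ sigmaHat f p q.2 < sigmaHat f p q.1}.Infinite :=
    Set.infinite_of_injective_forall_mem hinj2 hgen
  rw [psign, if_neg hinf]

lemma unbalanced_det (hf : Antitone f) (hp : 0 < p) (hN : ∀ i, N ≤ i → f i = 0)
    (F : ℤ → ℂ) {μp : ℕ} (hμpp : μp < p)
    (hplus : nn p N μp < rF f p N μp) :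
    Matrix.det (fun I J : Fin N =>
        if (p : ℤ) ∣ ((f I : ℤ) + (J : ℤ) - (I : ℤ)) then
          F (((f I : ℤ) + (J : ℤ) - (I : ℤ)) / p)
        else 0) = 0 := by
  classical
  set A : Matrix (Fin N) (Fin N) ℂ := fun I J =>
    if (p : ℤ) ∣ ((f I : ℤ) + (J : ℤ) - (I : ℤ)) then
      F (((f I : ℤ) + (J : ℤ) - (I : ℤ)) / p)
    else 0 with hA
  rw [Matrix.det_apply]
  apply Finset.sum_eq_zero
  intro τ _
  suffices h : ∏ x, A (τ x) x = 0 by rw [h, smul_zero]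
  by_contra hprod
  have hne : ∀ x, A (τ x) x ≠ 0 := fun x hx =>
    hprod (Finset.prod_eq_zero (Finset.mem_univ x) hx)
  have cardRow : (Finset.univ.filter (fun I : Fin N => mu f p I.val = μp)).card
      = rF f p N μp := by
    rw [rF]
    refine Finset.card_bij' (fun I _ => I.val)
      (fun n hn => (⟨n, Finset.mem_range.mp (Finset.mem_filter.mp hn).1⟩ : Fin N))
      ?_ ?_ ?_ ?_
    · intro I hI
      exact Finset.mem_filter.mpr
        ⟨Finset.mem_range.mpr I.isLt, (Finset.mem_filter.mp hI).2⟩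
    · intro n hn
      exact Finset.mem_filter.mpr ⟨Finset.mem_univ _, (Finset.mem_filter.mp hn).2⟩
    · intro I hI; rfl
    · intro n hn; rfl
  have cardCol : (Finset.univ.filter (fun J : Fin N => J.val % p = μp)).card
      = nn p N μp := by
    rw [← count_mod hp hμpp (fun j => nn_iff hp hμpp j)]
    refine Finset.card_bij' (fun I _ => I.val)
      (fun n hn => (⟨n, Finset.mem_range.mp (Finset.mem_filter.mp hn).1⟩ : Fin N))
      ?_ ?_ ?_ ?_
    · intro I hI
      exact Finset.mem_filter.mpr
        ⟨Finset.mem_range.mpr I.isLt, (Finset.mem_filter.mp hI).2⟩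
    · intro n hn
      exact Finset.mem_filter.mpr ⟨Finset.mem_univ _, (Finset.mem_filter.mp hn).2⟩
    · intro I hI; rfl
    · intro n hn; rfl
  have hmap : ∀ I ∈ Finset.univ.filter (fun I : Fin N => mu f p I.val = μp),
      τ⁻¹ I ∈ Finset.univ.filter (fun J : Fin N => J.val % p = μp) := by
    intro I hI
    rw [Finset.mem_filter] at hI
    have h0 := hne (τ⁻¹ I)
    rw [show τ (τ⁻¹ I) = I from τ.apply_symm_apply I] at h0
    rw [Finset.mem_filter]
    refine ⟨Finset.mem_univ _, ?_⟩
    by_contra hc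
    apply h0
    rw [hA]
    simp only
    rw [if_neg]
    rw [div_iff hp]
    rw [hI.2]
    exact hc
  have hinj : Set.InjOn (fun I => τ⁻¹ I)
      ↑(Finset.univ.filter (fun I : Fin N => mu f p I.val = μp)) :=
    fun x _ y _ h => (τ⁻¹).injective h
  have hle := Finset.card_le_card_of_injOn _ hmap hinj
  omega

lemma balanced_case (hf : Antitone f) (hp : 0 < p) (hN : ∀ i, N ≤ i → f i = 0)
    (F : ℤ → ℂ) (hbal : ∀ μ, μ < p → rF f p N μ = nn p N μ) :
    Matrix.det (fun I J : Fin N =>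
        if (p : ℤ) ∣ ((f I : ℤ) + (J : ℤ) - (I : ℤ)) then
          F (((f I : ℤ) + (J : ℤ) - (I : ℤ)) / p)
        else 0) =
      (MM.psign f p : ℂ) *
        ∏ μ ∈ Finset.range p,
          Matrix.det (fun i j : Fin (nn p N μ) =>
            F ((MM.pquot f p μ i : ℤ) + (j : ℤ) - (i : ℤ))) := by
  classical
  set A : Matrix (Fin N) (Fin N) ℂ := fun I J =>
    if (p : ℤ) ∣ ((f I : ℤ) + (J : ℤ) - (I : ℤ)) then
      F (((f I : ℤ) + (J : ℤ) - (I : ℤ)) / p)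
    else 0 with hA
  -- σ̂ fixes the tail
  have hfix : ∀ I, N ≤ I → sigmaHat f p I = I := by
    intro I hI
    rw [sigmaHat_tail hf hp hN hI, hbal (I % p) (Nat.mod_lt I hp)]
    have h1 := (rnk_col_tail hf hp hN hI).1
    have h2 : nn p N (I % p) + (I / p - nn p N (I % p)) = I / p := by omega
    rw [h2]
    exact Nat.div_add_mod I p
  have hinj := sigmaHat_inj hf hp hN
  have hlt : ∀ I, I < N → sigmaHat f p I < N := by
    intro I hI
    by_contra h
    push_neg at h
    have h2 := hfix _ h
    have h3 := hinj h2
    omega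
  -- the permutation
  set g : Fin N → Fin N := fun I => ⟨sigmaHat f p I.val, hlt _ I.isLt⟩ with hg
  have hginj : Function.Injective g := by
    intro x y h
    simp only [hg, Fin.mk.injEq] at h
    exact Fin.ext (hinj h)
  set σperm : Equiv.Perm (Fin N) :=
    Equiv.ofBijective g (Finite.injective_iff_bijective.mp hginj) with hσperm
  have hσval : ∀ I : Fin N, (σperm I).val = sigmaHat f p I.val := fun I => rfl
  -- psign equals the sign of σperm
  have hEinv : {q : ℕ × ℕ | q.1 < q.2 ∧ sigmaHat f p q.2 < sigmaHat f p q.1} =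
      (fun x : (Σ _ : Fin N, Fin N) => ((x.2 : ℕ), (x.1 : ℕ))) ''
        ↑((Equiv.Perm.finPairsLT N).filter (fun x => σperm x.1 ≤ σperm x.2)) := by
    ext ⟨m1, m2⟩
    simp only [Set.mem_setOf_eq, Set.mem_image, Finset.mem_coe, Finset.mem_filter,
      Equiv.Perm.mem_finPairsLT]
    constructor
    · rintro ⟨hab, hinv⟩
      have hm2N : m2 < N := by
        by_contra h2
        push_neg at h2
        rw [hfix _ h2] at hinv
        rcases lt_or_ge m1 N with h1 | h1
        · exact absurd hinv (by have := hlt _ h1; omega)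
        · rw [hfix _ h1] at hinv; omega
      have hm1N : m1 < N := hab.trans hm2N
      refine ⟨⟨⟨m2, hm2N⟩, ⟨m1, hm1N⟩⟩, ⟨?_, ?_⟩, rfl⟩
      · exact hab
      · show (σperm ⟨m2, hm2N⟩) ≤ (σperm ⟨m1, hm1N⟩)
        rw [Fin.le_iff_val_le_val, hσval, hσval]
        exact hinv.le
    · rintro ⟨x, ⟨hlt12, hle⟩, heq⟩
      simp only [Prod.mk.injEq] at heq
      obtain ⟨e1, e2⟩ := heq
      subst e1; subst e2
      refine ⟨hlt12, ?_⟩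
      rw [Fin.le_iff_val_le_val, hσval, hσval] at hle
      have hne : (x.snd : ℕ) ≠ (x.fst : ℕ) := by
        intro h; exact absurd (Fin.ext h : x.snd = x.fst) (ne_of_lt hlt12)
      have hneq : sigmaHat f p (x.fst : ℕ) ≠ sigmaHat f p (x.snd : ℕ) := by
        intro h
        exact hne (hinj h).symm
      omega
  have hmapinj : Function.Injective
      (fun x : (Σ _ : Fin N, Fin N) => ((x.2 : ℕ), (x.1 : ℕ))) := by
    rintro ⟨a1, a2⟩ ⟨b1, b2⟩ h
    simp only [Prod.mk.injEq] at h
    have e1 : a1 = b1 := Fin.ext h.2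
    have e2 : a2 = b2 := Fin.ext h.1
    subst e1; subst e2; rfl
  have hfin : {q : ℕ × ℕ | q.1 < q.2 ∧ sigmaHat f p q.2 < sigmaHat f p q.1}.Finite := by
    rw [hEinv]; exact Set.Finite.image _ (Finset.finite_toSet _)
  have hpsign : psign f p = ((Equiv.Perm.sign σperm : ℤˣ) : ℤ) := by
    rw [psign, if_pos hfin, hEinv, Set.ncard_image_of_injective _ hmapinj,
      Set.ncard_coe_finset, signAux_eq_pow]
  -- charges are 1
  have hch : ∀ μ, μ < p → charge (col (maya f) p μ) = 1 := by
    intro μ hμ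
    rw [charge_col hf hp hN hμ, hbal μ hμ]
    ring
  -- blocks
  set Bl : ∀ μ : Fin p, Matrix (Fin (nn p N μ.val)) (Fin (nn p N μ.val)) ℂ :=
    fun μ => fun i j => F ((pquot f p μ.val i : ℤ) + (j : ℤ) - (i : ℤ)) with hBl
  set e := colEquiv p N hp with he
  -- determinant manipulation
  have hdet1 : A.det = ((Equiv.Perm.sign σperm : ℤˣ) : ℤ) *
      (A.submatrix (⇑σperm⁻¹) id).det := by
    have hAe : (A.submatrix (⇑σperm⁻¹) id).submatrix (⇑σperm) id = A := by
      ext i j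
      simp [Matrix.submatrix_apply]
    have := Matrix.det_permute σperm (A.submatrix (⇑σperm⁻¹) id)
    rw [hAe] at this
    exact_mod_cast this
  have hblock : (A.submatrix (⇑σperm⁻¹) id).submatrix (⇑e) (⇑e) =
      Matrix.blockDiagonal' Bl := by
    ext x y
    obtain ⟨μ, i⟩ := x
    obtain ⟨μ', j⟩ := y
    set I : Fin N := σperm⁻¹ (e ⟨μ, i⟩) with hIdef
    have hσI : σperm I = e ⟨μ, i⟩ := σperm.apply_symm_apply _
    have hval : sigmaHat f p I.val = p * i.val + μ.val := by
      have := congrArg Fin.val hσI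
      rw [hσval] at this
      exact this
    have hseq := sigmaHat_eq hf hp hN I.val
    rw [hval] at hseq
    have hmuIp := mu_lt (f := f) hp I.val
    have hmuI : mu f p I.val = μ.val := by
      have h1 : (p * rnk (col (maya f) p (mu f p I.val)) (kk f p I.val) + mu f p I.val) % p
          = mu f p I.val := by
        rw [Nat.mul_add_mod, Nat.mod_eq_of_lt hmuIp]
      have h2 : (p * i.val + μ.val) % p = μ.val := by
        rw [Nat.mul_add_mod, Nat.mod_eq_of_lt μ.isLt]
      rw [← h1, ← hseq, h2]
    have hrnkI : rnk (col (maya f) p μ.val) (kk f p I.val) = i.val := by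
      rw [hmuI] at hseq
      exact Nat.eq_of_mul_eq_mul_left hp (by omega)
    have hkmem : kk f p I.val ∈ col (maya f) p μ.val := by
      rw [← hmuI]; exact kk_mem hp I.val
    have hbead : bead (col (maya f) p μ.val) i.val = kk f p I.val :=
      bead_eq (col_lo hp hN μ.val) (col_hi hf hp μ.val μ.isLt) hkmem hrnkI
    have hkval : kk f p I.val = (pquot f p μ.val i.val : ℤ) - i.val := by
      have hform := bead_formula (col_lo hp hN μ.val) (col_hi hf hp μ.val μ.isLt) i.val
      rw [hbead, hch μ.val μ.isLt] at hform
      have : pquot f p μ.val i.val = partOf (col (maya f) p μ.val) i.val := rfl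
      rw [this]
      omega
    -- the column index
    have heyval : ((e ⟨μ', j⟩ : Fin N) : ℕ) = p * j.val + μ'.val := rfl
    have hsub : (A.submatrix (⇑σperm⁻¹) id).submatrix (⇑e) (⇑e) ⟨μ, i⟩ ⟨μ', j⟩
        = A I (e ⟨μ', j⟩) := rfl
    rw [hsub]
    have hcolmod : ((e ⟨μ', j⟩ : Fin N) : ℕ) % p = μ'.val := by
      rw [heyval, Nat.mul_add_mod, Nat.mod_eq_of_lt μ'.isLt]
    rcases eq_or_ne μ μ' with rfl | hne
    · -- diagonal block
      have hdvd : (p : ℤ) ∣ ((f I.val : ℤ) + ((e ⟨μ, j⟩ : Fin N) : ℕ) - (I.val : ℤ)) := by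
        rw [div_iff hp, hcolmod, hmuI]
      rw [hA]
      simp only [Matrix.blockDiagonal'_apply_eq, hBl]
      rw [if_pos (by exact_mod_cast hdvd)]
      congr 1
      have hb := bet_eq_k (f := f) hp I.val
      rw [hmuI] at hb
      have hkey : (f I.val : ℤ) + (((e ⟨μ, j⟩ : Fin N) : ℕ) : ℤ) - (I.val : ℤ)
          = (p:ℤ) * (kk f p I.val + j.val) := by
        unfold bet at hb
        have hcast : (((e ⟨μ, j⟩ : Fin N) : ℕ) : ℤ) = (p:ℤ) * j.val + μ.val := by
          rw [heyval]; push_cast; ring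
        rw [hcast, mul_add]
        omega
      have : ((f I.val : ℤ) + (((e ⟨μ, j⟩ : Fin N) : ℕ) : ℤ) - (I.val : ℤ)) / p
          = kk f p I.val + j.val := by
        rw [hkey]
        exact Int.mul_ediv_cancel_left _ (by exact_mod_cast hp.ne')
      rw [this, hkval]
      ring_nf
      exact (congrArg F (by ring)).trans (Matrix.blockDiagonal'_apply_eq Bl μ i j).symm
    · -- off-diagonal block
      rw [Matrix.blockDiagonal'_apply_ne Bl _ _ hne]
      rw [hA]
      simp only
      rw [if_neg]
      rw [div_iff hp, hcolmod, hmuI]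
      intro h
      exact hne (Fin.ext h.symm)
  have hdet2 : (A.submatrix (⇑σperm⁻¹) id).det = ∏ μ : Fin p, (Bl μ).det := by
    rw [← Matrix.det_submatrix_equiv_self e, hblock, det_blockDiagonal'']
  rw [hdet1, hdet2, hpsign]
  have hprod : ∏ μ : Fin p, (Bl μ).det =
      ∏ μ ∈ Finset.range p,
        Matrix.det (fun i j : Fin (nn p N μ) =>
          F ((pquot f p μ i : ℤ) + (j : ℤ) - (i : ℤ))) := by
    exact Fin.prod_univ_eq_prod_range
      (fun μ => Matrix.det (fun i j : Fin (nn p N μ) =>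
        F ((pquot f p μ i : ℤ) + (j : ℤ) - (i : ℤ)))) p
  rw [hprod]

end main

end DF

namespace DF
open MM

lemma exists_plus_minus {f : ℕ → ℕ} {p N : ℕ} (hp : 0 < p)
    (hunbal : ¬∀ μ, μ < p → rF f p N μ = nn p N μ) :
    (∃ μ < p, nn p N μ < rF f p N μ) ∧ (∃ μ < p, rF f p N μ < nn p N μ) := by
  push_neg at hunbal
  obtain ⟨μ0, hμ0p, hμ0ne⟩ := hunbal
  have hsum : ∑ μ ∈ Finset.range p, rF f p N μ = ∑ μ ∈ Finset.range p, nn p N μ := by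
    rw [sum_rF hp, sum_nn hp]
  constructor
  · by_contra h
    push_neg at h
    have hlt : ∑ μ ∈ Finset.range p, rF f p N μ < ∑ μ ∈ Finset.range p, nn p N μ := by
      apply Finset.sum_lt_sum
      · intro μ hμ
        exact h μ (Finset.mem_range.mp hμ)
      · exact ⟨μ0, Finset.mem_range.mpr hμ0p,
          lt_of_le_of_ne (h μ0 hμ0p) hμ0ne⟩
    omega
  · by_contra h
    push_neg at h
    have hlt : ∑ μ ∈ Finset.range p, nn p N μ < ∑ μ ∈ Finset.range p, rF f p N μ := by
      apply Finset.sum_lt_sum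
      · intro μ hμ
        exact h μ (Finset.mem_range.mp hμ)
      · exact ⟨μ0, Finset.mem_range.mpr hμ0p,
          lt_of_le_of_ne (h μ0 hμ0p) (Ne.symm hμ0ne)⟩
    omega

end DF


/-- determinant factorization into p-quotient blocks, weighted by the p-signature. -/
theorem det_factorization (p N : ℕ) (hp : 0 < p) (f : ℕ → ℕ) (hf : MM.IsPartition f)
    (hN : ∀ i, N ≤ i → f i = 0) (F : ℤ → ℂ) :
    Matrix.det (fun I J : Fin N =>
        if (p : ℤ) ∣ ((f I : ℤ) + (J : ℤ) - (I : ℤ)) then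
          F (((f I : ℤ) + (J : ℤ) - (I : ℤ)) / p)
        else 0) =
      (MM.psign f p : ℂ) *
        ∏ μ ∈ Finset.range p,
          Matrix.det (fun i j : Fin ((((N : ℤ) - (μ : ℤ) - 1).fdiv p + 1).toNat) =>
            F ((MM.pquot f p μ i : ℤ) + (j : ℤ) - (i : ℤ))) := by
  obtain ⟨hanti, _⟩ := hf
  by_cases hbal : ∀ μ, μ < p → DF.rF f p N μ = DF.nn p N μ
  · exact DF.balanced_case hanti hp hN F hbal
  · obtain ⟨⟨μp, hμpp, hplus⟩, ⟨μm, hμmp, hminus⟩⟩ := DF.exists_plus_minus hp hbal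
    rw [DF.unbalanced_det hanti hp hN F hμpp hplus,
      DF.unbalanced_psign hanti hp hN hμpp hμmp hplus hminus]
    simp
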